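/- For all real x, y ≥ 0 with x + y ≤ π: 2Λ(x) + Λ(y) − 2Λ(x + y) ≤ 4Λ(π/4). [The Lobachevsky-function optimization underlying the per-crossing bound v_oct of Garoufalidis–Lê used in Proposition 6.1; the maximum value 4Λ(π/4) is attained at (x, y) = (π/4, π/2).] -/

import Mathlib

open Real Filter

/-- The Lobachevsky function `Λ(x) = -∫₀ˣ log|2 sin t| dt`. -/
noncomputable def lob (x : ℝ) : ℝ := -∫ t in (0:ℝ)..x, Real.log |2 * Real.sin t|

open MeasureTheory intervalIntegral Set

noncomputable def L (t : ℝ) : ℝ := Real.log |2 * Real.sin t|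

lemma L_refl (s : ℝ) : L (π - s) = L s := by
  simp [L, Real.sin_pi_sub]

lemma measurable_L : Measurable L := by
  exact Real.measurable_log.comp ((Real.measurable_sin.const_mul 2).abs)

/-- log is integrable on (0,1]. -/
lemma integrableOn_log_Ioc01 : IntegrableOn Real.log (Set.Ioc (0:ℝ) 1) := by
  have h : IntegrableOn (fun x : ℝ => -Real.log x) (Set.Ioc (0:ℝ) 1) := by
    apply intervalIntegral.integrableOn_deriv_of_nonneg
      (g := fun x : ℝ => x - x * Real.log x)
    · exact (continuous_id.sub Real.continuous_mul_log).continuousOn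
    · intro t ht
      have h1 : HasDerivAt (fun x : ℝ => x * Real.log x) (Real.log t + 1) t :=
        Real.hasDerivAt_mul_log ht.1.ne'
      have := (hasDerivAt_id t).sub h1
      exact this.congr_deriv (by ring)
    · intro t ht
      simp only [neg_nonneg]
      exact Real.log_nonpos ht.1.le ht.2.le
  have h2 := h.neg
  apply h2.congr
  filter_upwards with t
  simp

lemma intervalIntegrable_L_half : IntervalIntegrable L volume 0 (π/2) := by
  rw [intervalIntegrable_iff_integrableOn_Ioc_of_le (by positivity)]
  have hg : IntegrableOn (fun t : ℝ => Real.log 2 + |Real.log t|) (Set.Ioc 0 (π/2)) := by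
    apply Integrable.add (integrableOn_const measure_Ioc_lt_top.ne)
    have h1 : IntegrableOn Real.log (Set.Ioc (0:ℝ) (π/2)) := by
      have h2 : IntegrableOn Real.log (Set.Ioc (1:ℝ) (π/2)) := by
        have hc : ContinuousOn Real.log (Set.Icc (1:ℝ) (π/2)) :=
          Real.continuousOn_log.mono (fun t ht => by
            simp only [Set.mem_compl_iff, Set.mem_singleton_iff]
            exact (by linarith [ht.1] : (0:ℝ) < t).ne')
        exact hc.integrableOn_Icc.mono_set Set.Ioc_subset_Icc_self
      have := integrableOn_log_Ioc01.union h2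
      apply this.mono_set
      intro t ht
      rcases le_or_gt t 1 with h | h
      · exact Or.inl ⟨ht.1, h⟩
      · exact Or.inr ⟨h, ht.2⟩
    exact h1.abs
  apply Integrable.mono' hg (measurable_L.aestronglyMeasurable)
  filter_upwards [ae_restrict_mem measurableSet_Ioc] with t ht
  have ht0 : 0 < t := ht.1
  have hsin : (2/π) * t ≤ Real.sin t := Real.mul_le_sin ht0.le ht.2
  have hsinpos : 0 < Real.sin t :=
    Real.sin_pos_of_pos_of_lt_pi ht0 (lt_of_le_of_lt ht.2 (by linarith [Real.pi_pos]))
  have habs : |2 * Real.sin t| = 2 * Real.sin t := abs_of_pos (by linarith)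
  have hub : L t ≤ Real.log 2 := by
    rw [L, habs]
    exact Real.log_le_log (by linarith) (by nlinarith [Real.sin_le_one t])
  have hlb : Real.log t ≤ L t := by
    rw [L, habs]
    apply Real.log_le_log ht0
    rw [div_mul_eq_mul_div, div_le_iff₀ Real.pi_pos] at hsin
    nlinarith [Real.pi_le_four, hsinpos.le]
  have h2 : (0:ℝ) ≤ Real.log 2 := Real.log_nonneg one_le_two
  rw [Real.norm_eq_abs, abs_le]
  constructor
  · have := neg_abs_le (Real.log t); linarith
  · have := le_abs_self (Real.log t)
    have := abs_nonneg (Real.log t)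
    linarith

lemma intervalIntegrable_L_pi : IntervalIntegrable L volume 0 π := by
  have h2 : IntervalIntegrable L volume (π/2) π := by
    have h := intervalIntegrable_L_half.comp_sub_left π
    rw [show (fun x => L (π - x)) = L from funext L_refl] at h
    have e1 : π - 0 = π := by ring
    have e2 : π - π/2 = π/2 := by ring
    rw [e1, e2] at h
    exact h.symm
  exact intervalIntegrable_L_half.trans h2

lemma intervalIntegrable_L {a b : ℝ} (ha : a ∈ Set.Icc 0 π) (hb : b ∈ Set.Icc 0 π) :
    IntervalIntegrable L volume a b := by
  apply intervalIntegrable_L_pi.mono_set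
  rw [Set.uIcc_of_le Real.pi_pos.le]
  exact Set.uIcc_subset_Icc ha hb

lemma integral_L_reflect (a b : ℝ) :
    ∫ s in a..b, L s = ∫ s in (π - b)..(π - a), L s := by
  calc ∫ s in a..b, L s = ∫ s in a..b, L (π - s) :=
        (intervalIntegral.integral_congr (fun t _ => L_refl t)).symm
    _ = ∫ s in (π - b)..(π - a), L s := intervalIntegral.integral_comp_sub_left L π

lemma memIcc_of (c : ℝ) (h1 : 0 ≤ c) (h2 : c ≤ π) : c ∈ Set.Icc 0 π := ⟨h1, h2⟩

lemma integral_L_pi_half : ∫ t in (0:ℝ)..(π/2), L t = 0 := by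
  have hpi := Real.pi_pos
  have m0 : (0:ℝ) ∈ Set.Icc 0 π := memIcc_of 0 le_rfl hpi.le
  have m1 : (π/4:ℝ) ∈ Set.Icc 0 π := memIcc_of _ (by positivity) (by linarith)
  have m2 : (π/2:ℝ) ∈ Set.Icc 0 π := memIcc_of _ (by positivity) (by linarith)
  have m3 : (3*π/4:ℝ) ∈ Set.Icc 0 π := memIcc_of _ (by positivity) (by linarith)
  have hsplit : (∫ t in (0:ℝ)..(π/2), L t)
      = (∫ t in (0:ℝ)..(π/4), L t) + ∫ t in (π/4:ℝ)..(π/2), L t :=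
    (intervalIntegral.integral_add_adjacent_intervals
      (intervalIntegrable_L m0 m1) (intervalIntegrable_L m1 m2)).symm
  have e1 : (∫ t in (π/4:ℝ)..(π/2), L t) = ∫ t in (π/2:ℝ)..(3*π/4), L t := by
    have h := integral_L_reflect (π/4) (π/2)
    rw [show π - π/2 = π/2 by ring, show π - π/4 = 3*π/4 by ring] at h
    exact h
  have e3 : (∫ u in (0:ℝ)..(π/4), L (2*u)) = (2:ℝ)⁻¹ • ∫ t in (0:ℝ)..(π/2), L t := by
    have h := intervalIntegral.integral_comp_mul_left (a := 0) (b := π/4) L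
      (c := (2:ℝ)) two_ne_zero
    rw [show (2:ℝ)*0 = 0 by ring, show (2:ℝ)*(π/4) = π/2 by ring] at h
    exact h
  have e4 : (∫ u in (0:ℝ)..(π/4), L (2*u)) = ∫ u in (0:ℝ)..(π/4), (L u + L (u + π/2)) := by
    apply intervalIntegral.integral_congr_ae
    apply Filter.Eventually.of_forall
    intro u hu
    rw [Set.uIoc_of_le (by positivity : (0:ℝ) ≤ π/4)] at hu
    have hu0 : 0 < u := hu.1
    have hu2 : u ≤ π/4 := hu.2
    have hs : 0 < Real.sin u := Real.sin_pos_of_pos_of_lt_pi hu0 (by linarith)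
    have hc : 0 < Real.cos u := Real.cos_pos_of_mem_Ioo ⟨by linarith, by linarith⟩
    unfold L
    rw [Real.sin_two_mul, Real.sin_add_pi_div_two]
    rw [abs_of_pos (by positivity), abs_of_pos (by positivity), abs_of_pos (by positivity)]
    rw [show (2:ℝ)*(2*Real.sin u*Real.cos u) = (2*Real.sin u)*(2*Real.cos u) by ring]
    exact Real.log_mul (by positivity) (by positivity)
  have e5 : (∫ u in (0:ℝ)..(π/4), L (u + π/2)) = ∫ t in (π/2:ℝ)..(3*π/4), L t := by
    have h := intervalIntegral.integral_comp_add_right (a := (0:ℝ)) (b := π/4) L (π/2)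
    rw [show (0:ℝ) + π/2 = π/2 by ring, show π/4 + π/2 = 3*π/4 by ring] at h
    exact h
  have hint2 : IntervalIntegrable (fun u => L (u + π/2)) volume 0 (π/4) := by
    have h := (intervalIntegrable_L m2 m3).comp_add_right (π/2)
    rw [show π/2 - π/2 = (0:ℝ) by ring, show 3*π/4 - π/2 = π/4 by ring] at h
    exact h
  have e6 : (∫ u in (0:ℝ)..(π/4), (L u + L (u + π/2)))
      = (∫ t in (0:ℝ)..(π/4), L t) + ∫ t in (π/2:ℝ)..(3*π/4), L t := by
    rw [intervalIntegral.integral_add (intervalIntegrable_L m0 m1) hint2, e5]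
  have := e3
  rw [e4, e6, ← e1, smul_eq_mul] at this
  linarith [hsplit, this]

lemma I_reflect (a : ℝ) (h0 : 0 ≤ a) (h1 : a ≤ π) :
    ∫ t in (0:ℝ)..(π - a), L t = -∫ t in (0:ℝ)..a, L t := by
  have hpi := Real.pi_pos
  have m0 : (0:ℝ) ∈ Set.Icc 0 π := memIcc_of 0 le_rfl hpi.le
  have m2 : (π/2:ℝ) ∈ Set.Icc 0 π := memIcc_of _ (by positivity) (by linarith)
  have ma : a ∈ Set.Icc 0 π := memIcc_of _ h0 h1
  have ma' : π - a ∈ Set.Icc 0 π := memIcc_of _ (by linarith) (by linarith)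
  have h2 : (∫ t in a..(π/2:ℝ), L t) = ∫ t in (π/2:ℝ)..(π - a), L t := by
    have h := integral_L_reflect a (π/2)
    rw [show π - π/2 = π/2 by ring] at h
    exact h
  have s1 : (∫ t in (0:ℝ)..(π/2), L t)
      = (∫ t in (0:ℝ)..a, L t) + ∫ t in a..(π/2:ℝ), L t :=
    (intervalIntegral.integral_add_adjacent_intervals
      (intervalIntegrable_L m0 ma) (intervalIntegrable_L ma m2)).symm
  have s2 : (∫ t in (0:ℝ)..(π - a), L t)
      = (∫ t in (0:ℝ)..(π/2), L t) + ∫ t in (π/2:ℝ)..(π - a), L t :=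
    (intervalIntegral.integral_add_adjacent_intervals
      (intervalIntegrable_L m0 m2) (intervalIntegrable_L m2 ma')).symm
  have h0' := integral_L_pi_half
  linarith [h2, s1, s2]

lemma sin_le_sin_of_abs {a b : ℝ} (ha : a ∈ Set.Icc 0 π) (hb : b ∈ Set.Icc 0 π)
    (h : |a - π/2| ≤ |b - π/2|) : Real.sin b ≤ Real.sin a := by
  have h1 : Real.sin a = Real.cos |a - π/2| := by
    rw [Real.cos_abs, Real.cos_sub_pi_div_two]
  have h2 : Real.sin b = Real.cos |b - π/2| := by
    rw [Real.cos_abs, Real.cos_sub_pi_div_two]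
  rw [h1, h2]
  apply Real.cos_le_cos_of_nonneg_of_le_pi (abs_nonneg _) _ h
  have hpi := Real.pi_pos
  rw [abs_le]
  constructor <;> linarith [hb.1, hb.2]

lemma integral_nonneg_excl (a b c c' : ℝ) (hab : a ≤ b) (f : ℝ → ℝ)
    (h : ∀ t, t ∈ Set.Icc a b → t ≠ c → t ≠ c' → 0 ≤ f t) : 0 ≤ ∫ t in a..b, f t := by
  apply intervalIntegral.integral_nonneg_of_ae_restrict hab
  have hc : ∀ᵐ (t:ℝ), t ≠ c := by
    rw [MeasureTheory.ae_iff]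
    have he : {t : ℝ | ¬ t ≠ c} = {c} := by ext t; simp
    rw [he]
    exact Real.volume_singleton
  have hc' : ∀ᵐ (t:ℝ), t ≠ c' := by
    rw [MeasureTheory.ae_iff]
    have he : {t : ℝ | ¬ t ≠ c'} = {c'} := by ext t; simp
    rw [he]
    exact Real.volume_singleton
  filter_upwards [ae_restrict_of_ae hc, ae_restrict_of_ae hc',
    ae_restrict_mem measurableSet_Icc] with t h1 h2 h3
  exact h t h3 h1 h2

lemma stepA (x y : ℝ) (hx : 0 ≤ x) (hy : 0 ≤ y) (hxy : x + y ≤ π) :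
    (∫ t in x..(x+y), L t) ≤ ∫ t in ((π-y)/2)..((π-y)/2 + y), L t := by
  have hpi := Real.pi_pos
  set s : ℝ := (π - y)/2 with hs
  have hy' : y ≤ π := by linarith
  have mx : x ∈ Set.Icc 0 π := ⟨hx, by linarith⟩
  have mxy : x + y ∈ Set.Icc 0 π := ⟨by linarith, hxy⟩
  have ms : s ∈ Set.Icc 0 π := ⟨by rw [hs]; linarith, by rw [hs]; linarith⟩
  have msy : s + y ∈ Set.Icc 0 π := ⟨by rw [hs]; linarith, by rw [hs]; linarith⟩
  rcases le_total x s with hcase | hcase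
  · have A1 : (∫ t in x..(x+y), L t) + ∫ t in (x+y)..(s+y), L t = ∫ t in x..(s+y), L t :=
      intervalIntegral.integral_add_adjacent_intervals
        (intervalIntegrable_L mx mxy) (intervalIntegrable_L mxy msy)
    have A2 : (∫ t in x..s, L t) + ∫ t in s..(s+y), L t = ∫ t in x..(s+y), L t :=
      intervalIntegral.integral_add_adjacent_intervals
        (intervalIntegrable_L mx ms) (intervalIntegrable_L ms msy)
    have A3 : (∫ t in x..s, L (t+y)) = ∫ t in (x+y)..(s+y), L t :=
      intervalIntegral.integral_comp_add_right (a := x) (b := s) L y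
    have hcomp : IntervalIntegrable (fun t => L (t + y)) volume x s := by
      have h := (intervalIntegrable_L mxy msy).comp_add_right y
      rw [add_sub_cancel_right, add_sub_cancel_right] at h
      exact h
    have A4 : (∫ t in x..s, (L (t+y) - L t))
        = (∫ t in x..s, L (t+y)) - ∫ t in x..s, L t :=
      intervalIntegral.integral_sub hcomp (intervalIntegrable_L mx ms)
    have A5 : 0 ≤ ∫ t in x..s, (L (t+y) - L t) := by
      apply integral_nonneg_excl x s 0 0 hcase
      intro t ht htne _
      have ht0 : 0 < t := lt_of_le_of_ne (le_trans hx ht.1) (Ne.symm htne)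
      have hts : t ≤ s := ht.2
      have hs2 : s ≤ π/2 := by rw [hs]; linarith
      have hsin_t : 0 < Real.sin t := Real.sin_pos_of_pos_of_lt_pi ht0 (by linarith)
      have habs : |t + y - π/2| ≤ |t - π/2| := by
        rw [abs_of_nonpos (by linarith : t - π/2 ≤ 0), abs_le]
        have : 2*t + y ≤ π := by rw [hs] at hts; linarith
        constructor <;> linarith
      have hss : Real.sin t ≤ Real.sin (t+y) :=
        sin_le_sin_of_abs (a := t+y) (b := t)
          ⟨by linarith, by rw [hs] at hts; linarith⟩ ⟨by linarith, by linarith⟩ habs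
      have h3 : L t ≤ L (t+y) := by
        unfold L
        rw [abs_of_pos (by linarith), abs_of_pos (by linarith)]
        exact Real.log_le_log (by linarith) (by linarith)
      linarith
    linarith [A1, A2, A3, A4, A5]
  · have B1 : (∫ t in s..(s+y), L t) + ∫ t in (s+y)..(x+y), L t = ∫ t in s..(x+y), L t :=
      intervalIntegral.integral_add_adjacent_intervals
        (intervalIntegrable_L ms msy) (intervalIntegrable_L msy mxy)
    have B2 : (∫ t in s..x, L t) + ∫ t in x..(x+y), L t = ∫ t in s..(x+y), L t :=
      intervalIntegral.integral_add_adjacent_intervals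
        (intervalIntegrable_L ms mx) (intervalIntegrable_L mx mxy)
    have B3 : (∫ t in s..x, L (t+y)) = ∫ t in (s+y)..(x+y), L t :=
      intervalIntegral.integral_comp_add_right (a := s) (b := x) L y
    have hcomp : IntervalIntegrable (fun t => L (t + y)) volume s x := by
      have h := (intervalIntegrable_L msy mxy).comp_add_right y
      rw [add_sub_cancel_right, add_sub_cancel_right] at h
      exact h
    have B4 : (∫ t in s..x, (L t - L (t+y)))
        = (∫ t in s..x, L t) - ∫ t in s..x, L (t+y) :=
      intervalIntegral.integral_sub (intervalIntegrable_L ms mx) hcomp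
    have B5 : 0 ≤ ∫ t in s..x, (L t - L (t+y)) := by
      apply integral_nonneg_excl s x 0 (π - y) hcase
      intro t ht htne htne'
      have ht0 : 0 < t := lt_of_le_of_ne (le_trans ms.1 ht.1) (Ne.symm htne)
      have htlt : t < π - y := lt_of_le_of_ne (by linarith [ht.2]) htne'
      have hst : s ≤ t := ht.1
      have hsin_t : 0 < Real.sin t := Real.sin_pos_of_pos_of_lt_pi ht0 (by linarith)
      have hsin_ty : 0 < Real.sin (t+y) :=
        Real.sin_pos_of_pos_of_lt_pi (by linarith) (by linarith)
      have habs : |t - π/2| ≤ |t + y - π/2| := by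
        have : π - y ≤ 2*t := by rw [hs] at hst; linarith
        rw [abs_of_nonneg (by linarith : 0 ≤ t + y - π/2), abs_le]
        constructor <;> linarith
      have hss : Real.sin (t+y) ≤ Real.sin t :=
        sin_le_sin_of_abs (a := t) (b := t+y)
          ⟨by linarith, by linarith⟩ ⟨by linarith, by linarith⟩ habs
      have h3 : L (t+y) ≤ L t := by
        unfold L
        rw [abs_of_pos (by linarith), abs_of_pos (by linarith)]
        exact Real.log_le_log (by linarith) (by linarith)
      linarith
    linarith [B1, B2, B3, B4, B5]

lemma intervalIntegrable_G {a b : ℝ} (ha : a ∈ Set.Icc 0 π) (hb : b ∈ Set.Icc 0 π) :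
    IntervalIntegrable (fun u => L ((π - u)/2)) volume a b := by
  have b1 : IntervalIntegrable L volume 0 (π/2) := intervalIntegrable_L_half
  have b2 := b1.comp_mul_right (c := 2⁻¹)
  have b3 := b2.comp_sub_left π
  have b3' : IntervalIntegrable (fun u => L ((π - u) * 2⁻¹)) volume π 0 := by
    convert b3 using 2 <;> ring
  have e : (fun u => L ((π - u) * 2⁻¹)) = (fun u => L ((π - u)/2)) := by
    funext u; rw [div_eq_mul_inv]
  rw [e] at b3'
  apply b3'.symm.mono_set
  rw [Set.uIcc_of_le Real.pi_pos.le]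
  exact Set.uIcc_subset_Icc ha hb

lemma stepC (y : ℝ) (hy : 0 ≤ y) (hy' : y ≤ π) :
    0 ≤ (∫ t in (0:ℝ)..y, L t) + 4 * (∫ t in (0:ℝ)..((π-y)/2), L t)
        - 4 * ∫ t in (0:ℝ)..(π/4), L t := by
  have hpi := Real.pi_pos
  set s : ℝ := (π - y)/2 with hs
  have m0 : (0:ℝ) ∈ Set.Icc 0 π := ⟨le_rfl, hpi.le⟩
  have my : y ∈ Set.Icc 0 π := ⟨hy, hy'⟩
  have ms : s ∈ Set.Icc 0 π := ⟨by rw [hs]; linarith, by rw [hs]; linarith⟩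
  have m4 : (π/4:ℝ) ∈ Set.Icc 0 π := ⟨by positivity, by linarith⟩
  have m2 : (π/2:ℝ) ∈ Set.Icc 0 π := ⟨by positivity, by linarith⟩
  have hC3 : (∫ t in (0:ℝ)..(π/4), L t) + ∫ t in (π/4:ℝ)..s, L t = ∫ t in (0:ℝ)..s, L t :=
    intervalIntegral.integral_add_adjacent_intervals
      (intervalIntegrable_L m0 m4) (intervalIntegrable_L m4 ms)
  rcases le_total y (π/2) with hcase | hcase
  · -- y ≤ π/2
    have hG : IntervalIntegrable (fun u => L ((π - u)/2)) volume y (π/2) :=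
      intervalIntegrable_G my m2
    have step1 : (∫ u in y..(π/2:ℝ), L ((π - u)/2))
        = ∫ v in (π - π/2)..(π - y), L (v/2) :=
      intervalIntegral.integral_comp_sub_left (a := y) (b := π/2) (fun v => L (v/2)) π
    have step2 : (∫ v in (π - π/2)..(π - y), L (v/2))
        = (2:ℝ) • ∫ t in ((π - π/2)/2)..((π - y)/2), L t :=
      intervalIntegral.integral_comp_div (a := π - π/2) (b := π - y) L two_ne_zero
    have Cval : (∫ u in y..(π/2:ℝ), L ((π - u)/2)) = 2 * ∫ t in (π/4:ℝ)..s, L t := by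
      rw [step1, step2, smul_eq_mul]
      congr 2 <;> ring
    have C2 : (∫ t in (0:ℝ)..y, L t) + ∫ u in y..(π/2:ℝ), L u = ∫ t in (0:ℝ)..(π/2), L t :=
      intervalIntegral.integral_add_adjacent_intervals
        (intervalIntegrable_L m0 my) (intervalIntegrable_L my m2)
    have C5 : (∫ u in y..(π/2:ℝ), (2 * L ((π - u)/2) - L u))
        = 2 * (∫ u in y..(π/2:ℝ), L ((π - u)/2)) - ∫ u in y..(π/2:ℝ), L u := by
      rw [intervalIntegral.integral_sub (hG.const_mul 2) (intervalIntegrable_L my m2),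
        intervalIntegral.integral_const_mul]
    have C4 : 0 ≤ ∫ u in y..(π/2:ℝ), (2 * L ((π - u)/2) - L u) := by
      apply integral_nonneg_excl y (π/2) 0 0 hcase
      intro u hu hune _
      have hu0 : 0 < u := lt_of_le_of_ne (le_trans hy hu.1) (Ne.symm hune)
      have hu2 : u ≤ π/2 := hu.2
      have hsin_u : 0 < Real.sin u := Real.sin_pos_of_pos_of_lt_pi hu0 (by linarith)
      have hcos : 0 < Real.cos (u/2) := Real.cos_pos_of_mem_Ioo ⟨by linarith, by linarith⟩
      have hsinh : 0 < Real.sin (u/2) := Real.sin_pos_of_pos_of_lt_pi (by linarith) (by linarith)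
      have hdo : Real.sin u = 2 * Real.sin (u/2) * Real.cos (u/2) := by
        have h := Real.sin_two_mul (u/2)
        rw [show 2*(u/2) = u by ring] at h
        exact h
      have hhalf : Real.sin (u/2) ≤ Real.cos (u/2) := by
        have h := Real.cos_le_cos_of_nonneg_of_le_pi (by linarith : 0 ≤ u/2)
          (by linarith : π/2 - u/2 ≤ π) (by linarith : u/2 ≤ π/2 - u/2)
        rwa [Real.cos_pi_div_two_sub] at h
      have hLu : L u = Real.log (2 * Real.sin u) := by
        unfold L; rw [abs_of_pos (by linarith)]
      have hLg : L ((π - u)/2) = Real.log (2 * Real.cos (u/2)) := by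
        unfold L
        rw [show (π - u)/2 = π/2 - u/2 by ring, Real.sin_pi_div_two_sub,
          abs_of_pos (by linarith)]
      have key : Real.log (2 * Real.sin u) ≤ 2 * Real.log (2 * Real.cos (u/2)) := by
        have h2 : Real.log ((2 * Real.cos (u/2)) * (2 * Real.cos (u/2)))
            = Real.log (2 * Real.cos (u/2)) + Real.log (2 * Real.cos (u/2)) :=
          Real.log_mul (ne_of_gt (by linarith)) (ne_of_gt (by linarith))
        have h3 : Real.log (2 * Real.sin u)
            ≤ Real.log ((2 * Real.cos (u/2)) * (2 * Real.cos (u/2))) :=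
          Real.log_le_log (by linarith) (by nlinarith)
        linarith
      rw [hLu, hLg]
      linarith
    have hpihalf := integral_L_pi_half
    rw [C5, Cval] at C4
    have hsym : (∫ t in s..(π/4:ℝ), L t) = -∫ t in (π/4:ℝ)..s, L t :=
      intervalIntegral.integral_symm (π/4) s
    linarith
  · -- π/2 ≤ y
    have hG : IntervalIntegrable (fun u => L ((π - u)/2)) volume (π/2) y :=
      intervalIntegrable_G m2 my
    have step1 : (∫ u in (π/2:ℝ)..y, L ((π - u)/2))
        = ∫ v in (π - y)..(π - π/2), L (v/2) :=
      intervalIntegral.integral_comp_sub_left (a := π/2) (b := y) (fun v => L (v/2)) π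
    have step2 : (∫ v in (π - y)..(π - π/2), L (v/2))
        = (2:ℝ) • ∫ t in ((π - y)/2)..((π - π/2)/2), L t :=
      intervalIntegral.integral_comp_div (a := π - y) (b := π - π/2) L two_ne_zero
    have Cval : (∫ u in (π/2:ℝ)..y, L ((π - u)/2)) = 2 * ∫ t in s..(π/4:ℝ), L t := by
      rw [step1, step2, smul_eq_mul]
      congr 2 <;> ring
    have C2 : (∫ t in (0:ℝ)..(π/2), L t) + ∫ u in (π/2:ℝ)..y, L u = ∫ t in (0:ℝ)..y, L t :=
      intervalIntegral.integral_add_adjacent_intervals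
        (intervalIntegrable_L m0 m2) (intervalIntegrable_L m2 my)
    have C5 : (∫ u in (π/2:ℝ)..y, (L u - 2 * L ((π - u)/2)))
        = (∫ u in (π/2:ℝ)..y, L u) - 2 * ∫ u in (π/2:ℝ)..y, L ((π - u)/2) := by
      rw [intervalIntegral.integral_sub (intervalIntegrable_L m2 my) (hG.const_mul 2),
        intervalIntegral.integral_const_mul]
    have C4 : 0 ≤ ∫ u in (π/2:ℝ)..y, (L u - 2 * L ((π - u)/2)) := by
      apply integral_nonneg_excl (π/2) y π π hcase
      intro u hu hune _
      have hu2 : π/2 ≤ u := hu.1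
      have hupi : u < π := lt_of_le_of_ne (le_trans hu.2 hy') hune
      have hsin_u : 0 < Real.sin u := Real.sin_pos_of_pos_of_lt_pi (by linarith) hupi
      have hcos : 0 < Real.cos (u/2) := Real.cos_pos_of_mem_Ioo ⟨by linarith, by linarith⟩
      have hsinh : 0 < Real.sin (u/2) := Real.sin_pos_of_pos_of_lt_pi (by linarith) (by linarith)
      have hdo : Real.sin u = 2 * Real.sin (u/2) * Real.cos (u/2) := by
        have h := Real.sin_two_mul (u/2)
        rw [show 2*(u/2) = u by ring] at h
        exact h
      have hhalf : Real.cos (u/2) ≤ Real.sin (u/2) := by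
        have h := Real.cos_le_cos_of_nonneg_of_le_pi (by linarith : 0 ≤ π/2 - u/2)
          (by linarith : u/2 ≤ π) (by linarith : π/2 - u/2 ≤ u/2)
        rwa [Real.cos_pi_div_two_sub] at h
      have hLu : L u = Real.log (2 * Real.sin u) := by
        unfold L; rw [abs_of_pos (by linarith)]
      have hLg : L ((π - u)/2) = Real.log (2 * Real.cos (u/2)) := by
        unfold L
        rw [show (π - u)/2 = π/2 - u/2 by ring, Real.sin_pi_div_two_sub,
          abs_of_pos (by linarith)]
      have key : 2 * Real.log (2 * Real.cos (u/2)) ≤ Real.log (2 * Real.sin u) := by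
        have h2 : Real.log ((2 * Real.cos (u/2)) * (2 * Real.cos (u/2)))
            = Real.log (2 * Real.cos (u/2)) + Real.log (2 * Real.cos (u/2)) :=
          Real.log_mul (ne_of_gt (by linarith)) (ne_of_gt (by linarith))
        have h3 : Real.log ((2 * Real.cos (u/2)) * (2 * Real.cos (u/2)))
            ≤ Real.log (2 * Real.sin u) :=
          Real.log_le_log (by nlinarith) (by nlinarith)
        linarith
      rw [hLu, hLg]
      linarith
    have hpihalf := integral_L_pi_half
    rw [C5, Cval] at C4
    have hsym : (∫ t in s..(π/4:ℝ), L t) = -∫ t in (π/4:ℝ)..s, L t :=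
      intervalIntegral.integral_symm (π/4) s
    linarith

lemma lob_eq (a : ℝ) : lob a = -∫ t in (0:ℝ)..a, L t := rfl

theorem lob_optimization (x y : ℝ) (hx : 0 ≤ x) (hy : 0 ≤ y) (hxy : x + y ≤ Real.pi) :
    2 * lob x + lob y - 2 * lob (x + y) ≤ 4 * lob (Real.pi / 4) := by
  have hpi := Real.pi_pos
  have hy' : y ≤ π := by linarith
  have m0 : (0:ℝ) ∈ Set.Icc 0 π := ⟨le_rfl, hpi.le⟩
  have mx : x ∈ Set.Icc 0 π := ⟨hx, by linarith⟩
  have mxy : x + y ∈ Set.Icc 0 π := ⟨by linarith, hxy⟩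
  have ms : (π - y)/2 ∈ Set.Icc 0 π := ⟨by linarith, by linarith⟩
  have msy : (π - y)/2 + y ∈ Set.Icc 0 π := ⟨by linarith, by linarith⟩
  have hA : (∫ t in x..(x+y), L t) ≤ ∫ t in ((π-y)/2)..((π-y)/2 + y), L t :=
    stepA x y hx hy hxy
  have hC : 0 ≤ (∫ t in (0:ℝ)..y, L t) + 4 * (∫ t in (0:ℝ)..((π-y)/2), L t)
      - 4 * ∫ t in (0:ℝ)..(π/4), L t := stepC y hy hy'
  have hrefl : (∫ t in (0:ℝ)..((π-y)/2 + y), L t) = -∫ t in (0:ℝ)..((π-y)/2), L t := by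
    have h := I_reflect ((π-y)/2) (by linarith) (by linarith)
    rw [show π - (π-y)/2 = (π-y)/2 + y by ring] at h
    exact h
  have add1 : (∫ t in (0:ℝ)..x, L t) + ∫ t in x..(x+y), L t = ∫ t in (0:ℝ)..(x+y), L t :=
    intervalIntegral.integral_add_adjacent_intervals
      (intervalIntegrable_L m0 mx) (intervalIntegrable_L mx mxy)
  have add2 : (∫ t in (0:ℝ)..((π-y)/2), L t) + ∫ t in ((π-y)/2)..((π-y)/2 + y), L t
      = ∫ t in (0:ℝ)..((π-y)/2 + y), L t :=
    intervalIntegral.integral_add_adjacent_intervals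
      (intervalIntegrable_L m0 ms) (intervalIntegrable_L ms msy)
  simp only [lob_eq]
  linarith [hA, hC, hrefl, add1, add2]
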